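/- For each k ∈ ℕ, consider a multilayer e-filter setting with null structure on a probability space, with N_k features and M layers, where the group sizes |A_g^(m)| are uniformly bounded over k, m, g and N_k → ∞ (so G_k^(m) → ∞ for every m). Fix original levels α₀^(1),…,α₀^(M) ∈ (0,1) and target levels α^(1),…,α^(M) ∈ (0,1). For each k and m, let R_k^(m) ⊆ [G_k^(m)] be a random rejection set and V̂_k^(m) a nonnegative random variable such that limsup_{k→∞} E[|R_k^(m) ∩ H0,k^(m)| / max(V̂_k^(m), α₀^(m))] ≤ 1. Define e_{g,k}^(m) = G_k^(m)·1{g ∈ R_k^(m)}/max(V̂_k^(m), α₀^(m)) and let S_k be the output of the generalized e-filter at levels α^(1),…,α^(M). Then limsup_{k→∞} FDR_k^(m) ≤ α^(m) for every m ∈ [M]. -/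

import Mathlib

open scoped ENNReal
open Filter MeasureTheory

namespace MultilayerEFilter

variable {N M : ℕ} {G : Fin M → ℕ}

/-- Candidate selection set `S(t) = {j : e_{h(m,j)}^(m) ≥ t^(m) for all m}`. -/
noncomputable def sel (h : (m : Fin M) → Fin N → Fin (G m))
    (e : (m : Fin M) → Fin (G m) → ℝ≥0∞) (t : Fin M → ℝ≥0∞) : Finset (Fin N) :=
  Finset.univ.filter fun j => ∀ m, t m ≤ e m (h m j)

/-- Induced group selection `S^(m) = {g : A_g^(m) ∩ S ≠ ∅}`. -/
noncomputable def selGrp (A : (m : Fin M) → Fin (G m) → Finset (Fin N))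
    (S : Finset (Fin N)) (m : Fin M) : Finset (Fin (G m)) :=
  Finset.univ.filter fun g => ∃ j ∈ A m g, j ∈ S

/-- Estimated FDP at layer `m`: `(G^(m)/t^(m)) / (|S^(m)(t)| ∨ 1)` (with `G/∞ = 0`). -/
noncomputable def FDPhat (A : (m : Fin M) → Fin (G m) → Finset (Fin N))
    (h : (m : Fin M) → Fin N → Fin (G m))
    (e : (m : Fin M) → Fin (G m) → ℝ≥0∞) (t : Fin M → ℝ≥0∞) (m : Fin M) : ℝ≥0∞ :=
  ((G m : ℝ≥0∞) / t m) / ((max (selGrp A (sel h e t) m).card 1 : ℕ) : ℝ≥0∞)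

/-- Admissible threshold vectors. -/
noncomputable def admissible (A : (m : Fin M) → Fin (G m) → Finset (Fin N))
    (h : (m : Fin M) → Fin N → Fin (G m))
    (e : (m : Fin M) → Fin (G m) → ℝ≥0∞) (α : Fin M → ℝ) : Set (Fin M → ℝ≥0∞) :=
  {t | (∀ m, 1 ≤ t m) ∧ ∀ m, FDPhat A h e t m ≤ ENNReal.ofReal (α m)}

/-- Threshold of the generalized e-filter: coordinatewise minimum over admissible vectors. -/
noncomputable def filterThreshold (A : (m : Fin M) → Fin (G m) → Finset (Fin N))
    (h : (m : Fin M) → Fin N → Fin (G m))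
    (e : (m : Fin M) → Fin (G m) → ℝ≥0∞) (α : Fin M → ℝ) (m : Fin M) : ℝ≥0∞ :=
  sInf {s | ∃ t ∈ admissible A h e α, t m = s}

/-- Output of the generalized e-filter. -/
noncomputable def output (A : (m : Fin M) → Fin (G m) → Finset (Fin N))
    (h : (m : Fin M) → Fin N → Fin (G m))
    (e : (m : Fin M) → Fin (G m) → ℝ≥0∞) (α : Fin M → ℝ) : Finset (Fin N) :=
  sel h e (filterThreshold A h e α)

/-- Null groups at layer `m`: groups entirely contained in the null feature set. -/
def nullGrp (A : (m : Fin M) → Fin (G m) → Finset (Fin N))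
    (H0 : Finset (Fin N)) (m : Fin M) : Finset (Fin (G m)) :=
  Finset.univ.filter fun g => A m g ⊆ H0

/-- Layer-`m` false discovery proportion of a selected feature set. -/
noncomputable def FDP (A : (m : Fin M) → Fin (G m) → Finset (Fin N))
    (H0 : Finset (Fin N)) (S : Finset (Fin N)) (m : Fin M) : ℝ≥0∞ :=
  ((selGrp A S m ∩ nullGrp A H0 m).card : ℝ≥0∞) /
    ((max (selGrp A S m).card 1 : ℕ) : ℝ≥0∞)

end MultilayerEFilter

namespace MultilayerEFilter

/-!
STATEMENT 10 (Theorem 2.8, asymptotic case: FEFP with base procedures in K_asy).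

Along a sequence of settings with uniformly bounded group sizes and `N_k → ∞`,
if for each layer `m` the random rejection sets `R_k^(m)` and estimates `V̂_k^(m)`
satisfy `limsup_k E[|R_k^(m) ∩ H0,k^(m)| / max(V̂_k^(m), α₀^(m))] ≤ 1`, then the
generalized e-filter applied to the one-bit generalized e-values
`e_{g,k}^(m) = G_k^(m)·1{g ∈ R_k^(m)}/max(V̂_k^(m), α₀^(m))` satisfies
`limsup_k FDR_k^(m) ≤ α^(m)` for every `m`.
-/

variable {N M : ℕ} {G : Fin M → ℕ}

-- threshold admissibility at each coordinate
lemma one_le_filterThreshold (A : (m : Fin M) → Fin (G m) → Finset (Fin N))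
    (h : (m : Fin M) → Fin N → Fin (G m))
    (e : (m : Fin M) → Fin (G m) → ℝ≥0∞) (α : Fin M → ℝ) (m : Fin M) :
    1 ≤ filterThreshold A h e α m :=
  le_sInf (by rintro s ⟨t, ht, rfl⟩; exact ht.1 m)

lemma sel_anti (h : (m : Fin M) → Fin N → Fin (G m))
    (e : (m : Fin M) → Fin (G m) → ℝ≥0∞) {t t' : Fin M → ℝ≥0∞}
    (hle : ∀ m, t m ≤ t' m) : sel h e t' ⊆ sel h e t := by
  intro j hj
  simp only [sel, Finset.mem_filter, Finset.mem_univ, true_and] at hj ⊢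
  exact fun m => le_trans (hle m) (hj m)

lemma selGrp_mono (A : (m : Fin M) → Fin (G m) → Finset (Fin N))
    {S S' : Finset (Fin N)} (hS : S ⊆ S') (m : Fin M) :
    selGrp A S m ⊆ selGrp A S' m := by
  intro g hg
  simp only [selGrp, Finset.mem_filter, Finset.mem_univ, true_and] at hg ⊢
  obtain ⟨j, hj, hjS⟩ := hg
  exact ⟨j, hj, hS hjS⟩

lemma FDPhat_filterThreshold_le (A : (m : Fin M) → Fin (G m) → Finset (Fin N))
    (h : (m : Fin M) → Fin N → Fin (G m))
    (e : (m : Fin M) → Fin (G m) → ℝ≥0∞) (α : Fin M → ℝ) (hα : ∀ m, 0 < α m) (m : Fin M) :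
    FDPhat A h e (filterThreshold A h e α) m ≤ ENNReal.ofReal (α m) := by
  set th := filterThreshold A h e α with hth
  set D : ℝ≥0∞ := ((max (selGrp A (sel h e th) m).card 1 : ℕ) : ℝ≥0∞) with hD
  have hD1 : (1 : ℝ≥0∞) ≤ D := by
    rw [hD]; exact_mod_cast Nat.one_le_iff_ne_zero.mpr (by positivity)
  have hD0 : D ≠ 0 := by intro h0; rw [h0] at hD1; simp at hD1
  have hDt : D ≠ ∞ := by rw [hD]; exact ENNReal.natCast_ne_top _
  set B : ℝ≥0∞ := ENNReal.ofReal (α m) * D with hB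
  have hαE : ENNReal.ofReal (α m) ≠ 0 := by
    simp [ENNReal.ofReal_eq_zero, not_le, hα m]
  have hB0 : B ≠ 0 := mul_ne_zero hαE hD0
  have hBt : B ≠ ∞ := ENNReal.mul_ne_top ENNReal.ofReal_ne_top hDt
  have hth0 : th m ≠ 0 := by
    intro h0
    have := one_le_filterThreshold A h e α m
    rw [← hth, h0] at this; simp at this
  -- key: lower bound on threshold
  have hkey : (G m : ℝ≥0∞) / B ≤ th m := by
    refine le_sInf ?_
    rintro s ⟨t, ht, rfl⟩
    have ht1 : t m ≠ 0 := by
      intro h0; have := ht.1 m; rw [h0] at this; simp at this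
    have hsub : sel h e t ⊆ sel h e th :=
      sel_anti h e (fun m' => sInf_le ⟨t, ht, rfl⟩)
    have hDle : ((max (selGrp A (sel h e t) m).card 1 : ℕ) : ℝ≥0∞) ≤ D := by
      rw [hD]
      exact_mod_cast max_le_max (Finset.card_le_card (selGrp_mono A hsub m)) le_rfl
    have hDt0 : ((max (selGrp A (sel h e t) m).card 1 : ℕ) : ℝ≥0∞) ≠ 0 :=
      Nat.cast_ne_zero.mpr (Nat.one_le_iff_ne_zero.mp (le_max_right _ 1))
    have h2 := ht.2 m
    rw [FDPhat] at h2
    have h3 : (G m : ℝ≥0∞) / t m ≤ ENNReal.ofReal (α m) *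
        ((max (selGrp A (sel h e t) m).card 1 : ℕ) : ℝ≥0∞) :=
      (ENNReal.div_le_iff_le_mul (Or.inl hDt0) (Or.inl (ENNReal.natCast_ne_top _))).mp h2
    have h4 : (G m : ℝ≥0∞) / t m ≤ B :=
      h3.trans (by rw [hB]; exact mul_le_mul_right hDle _)
    have h5 : (G m : ℝ≥0∞) ≤ B * t m :=
      (ENNReal.div_le_iff_le_mul (Or.inl ht1) (Or.inr hB0)).mp h4
    rw [ENNReal.div_le_iff_le_mul (Or.inl hB0) (Or.inr ht1), mul_comm]
    exact h5
  have hG : (G m : ℝ≥0∞) ≤ B * th m := by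
    calc (G m : ℝ≥0∞) = B * ((G m : ℝ≥0∞) / B) := (ENNReal.mul_div_cancel hB0 hBt).symm
      _ ≤ B * th m := mul_le_mul_right hkey _
  rw [FDPhat]
  rw [ENNReal.div_le_iff_le_mul (Or.inl hD0) (Or.inl hDt)]
  rw [ENNReal.div_le_iff_le_mul (Or.inl hth0) (Or.inr hB0)]
  exact hG

lemma pointwise_bound {N M : ℕ} {G : Fin M → ℕ}
    (A : (m : Fin M) → Fin (G m) → Finset (Fin N))
    (h : (m : Fin M) → Fin N → Fin (G m))
    (hdisj : ∀ m, ∀ g₁ g₂ : Fin (G m), g₁ ≠ g₂ → Disjoint (A m g₁) (A m g₂))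
    (hmem : ∀ m j, j ∈ A m (h m j))
    (H0 : Finset (Fin N)) (α₀ α : Fin M → ℝ)
    (hα₀ : ∀ m, 0 < α₀ m) (hα : ∀ m, 0 < α m)
    (R : (m : Fin M) → Finset (Fin (G m))) (V : Fin M → ℝ) (m : Fin M) :
    FDP A H0 (output A h (fun m' g => ENNReal.ofReal
        ((G m' : ℝ) * (if g ∈ R m' then 1 else 0) / max (V m') (α₀ m'))) α) m
      ≤ ENNReal.ofReal (α m) *
        ENNReal.ofReal (((R m ∩ nullGrp A H0 m).card : ℝ) / max (V m) (α₀ m)) := by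
  set e : (m' : Fin M) → Fin (G m') → ℝ≥0∞ := fun m' g => ENNReal.ofReal
      ((G m' : ℝ) * (if g ∈ R m' then 1 else 0) / max (V m') (α₀ m')) with he
  set th := filterThreshold A h e α with hth
  have hout : output A h e α = sel h e th := rfl
  rw [hout]
  set S := sel h e th with hS
  set Sm := selGrp A S m with hSm
  set Nl := nullGrp A H0 m with hNl
  rcases Nat.eq_zero_or_pos (Sm ∩ Nl).card with hc | hc
  · rw [FDP, ← hSm, ← hNl, hc]
    simp
  · set mV := max (V m) (α₀ m) with hmV
    have hmVpos : 0 < mV := lt_of_lt_of_le (hα₀ m) (le_max_right _ _)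
    have hth1 : (1 : ℝ≥0∞) ≤ th m := one_le_filterThreshold A h e α m
    have hth0 : th m ≠ 0 := by intro h0; rw [h0] at hth1; simp at hth1
    -- every selected group at layer m has e-value ≥ th m
    have hthle : ∀ g ∈ Sm, th m ≤ e m g := by
      intro g hg
      rw [hSm, selGrp, Finset.mem_filter] at hg
      obtain ⟨-, j, hjA, hjS⟩ := hg
      rw [hS, sel, Finset.mem_filter] at hjS
      have hgj : h m j = g := by
        by_contra hne'
        exact Finset.disjoint_left.mp (hdisj m _ _ hne') (hmem m j) hjA
      exact hgj ▸ hjS.2 m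
    -- selected null groups are rejected null groups
    have hsub : Sm ∩ Nl ⊆ R m ∩ Nl := by
      intro g hg
      rw [Finset.mem_inter] at hg ⊢
      refine ⟨?_, hg.2⟩
      by_contra hgR
      have h1 : (1 : ℝ≥0∞) ≤ e m g := le_trans hth1 (hthle g hg.1)
      rw [he] at h1
      simp only [if_neg hgR, mul_zero, zero_div, ENNReal.ofReal_zero] at h1
      exact absurd h1 (by simp)
    obtain ⟨g0, hg0⟩ := Finset.card_pos.mp hc
    have hg0S : g0 ∈ Sm := (Finset.mem_inter.mp hg0).1
    have hg0R : g0 ∈ R m := (Finset.mem_inter.mp (hsub hg0)).1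
    have hGpos : 0 < G m := g0.pos
    have hGE0 : (G m : ℝ≥0∞) ≠ 0 := Nat.cast_ne_zero.mpr hGpos.ne'
    have hthle0 : th m ≤ ENNReal.ofReal ((G m : ℝ) / mV) := by
      have h1 := hthle g0 hg0S
      simp only [he, if_pos hg0R, mul_one] at h1
      exact h1
    have htne : th m ≠ ∞ := ne_top_of_le_ne_top ENNReal.ofReal_ne_top hthle0
    set a := (G m : ℝ≥0∞) / th m with ha
    have ha0 : a ≠ 0 := by
      simp only [ha, ne_eq, ENNReal.div_eq_zero_iff, not_or]
      exact ⟨hGE0, htne⟩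
    have hat : a ≠ ∞ := (ENNReal.div_lt_top (ENNReal.natCast_ne_top _) hth0).ne
    set D : ℝ≥0∞ := ((max Sm.card 1 : ℕ) : ℝ≥0∞) with hD
    set c : ℝ≥0∞ := ((Sm ∩ Nl).card : ℝ≥0∞) with hcdef
    have claimA : a / D ≤ ENNReal.ofReal (α m) := by
      have := FDPhat_filterThreshold_le A h e α hα m
      rwa [FDPhat] at this
    have hsplit : (c / a) * (a / D) = c / D := by
      simp only [div_eq_mul_inv]
      rw [mul_assoc, ← mul_assoc a⁻¹, ENNReal.inv_mul_cancel ha0 hat, one_mul]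
    set w := ENNReal.ofReal mV with hw
    have hw0 : w ≠ 0 := by
      rw [hw]; simp [ENNReal.ofReal_eq_zero, not_le, hmVpos]
    have h7 : w * th m ≤ (G m : ℝ≥0∞) := by
      calc w * th m ≤ w * ENNReal.ofReal ((G m : ℝ) / mV) :=
            mul_le_mul_right hthle0 _
        _ = ENNReal.ofReal (mV * ((G m : ℝ) / mV)) :=
            (ENNReal.ofReal_mul hmVpos.le).symm
        _ = ENNReal.ofReal ((G m : ℝ)) := by
            rw [mul_comm, div_mul_cancel₀ _ hmVpos.ne']
        _ = (G m : ℝ≥0∞) := ENNReal.ofReal_natCast _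
    have hage : w ≤ a :=
      (ENNReal.le_div_iff_mul_le (Or.inl hth0) (Or.inl htne)).mpr h7
    have hcr : c ≤ ENNReal.ofReal ((R m ∩ Nl).card : ℝ) := by
      rw [hcdef, ENNReal.ofReal_natCast]
      exact_mod_cast Finset.card_le_card hsub
    have hca : c / a ≤ ENNReal.ofReal ((R m ∩ Nl).card : ℝ) * w⁻¹ := by
      rw [div_eq_mul_inv]
      exact mul_le_mul' hcr (ENNReal.inv_le_inv' hage)
    calc FDP A H0 S m = c / D := by rw [FDP, ← hSm, ← hNl, ← hcdef, ← hD]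
      _ = (c / a) * (a / D) := hsplit.symm
      _ ≤ (c / a) * ENNReal.ofReal (α m) := mul_le_mul_right claimA _
      _ ≤ (ENNReal.ofReal ((R m ∩ Nl).card : ℝ) * w⁻¹) * ENNReal.ofReal (α m) :=
            mul_le_mul_left hca _
      _ = ENNReal.ofReal (α m) * ENNReal.ofReal (((R m ∩ Nl).card : ℝ) / mV) := by
            rw [ENNReal.ofReal_div_of_pos hmVpos, div_eq_mul_inv, mul_comm]


theorem stmt10 (M : ℕ) (hM : 1 ≤ M) (N : ℕ → ℕ) (G : ℕ → Fin M → ℕ)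
    (A : (k : ℕ) → (m : Fin M) → Fin (G k m) → Finset (Fin (N k)))
    (h : (k : ℕ) → (m : Fin M) → Fin (N k) → Fin (G k m))
    (hne : ∀ k m g, (A k m g).Nonempty)
    (hdisj : ∀ k m, ∀ g₁ g₂ : Fin (G k m), g₁ ≠ g₂ → Disjoint (A k m g₁) (A k m g₂))
    (hmem : ∀ k m j, j ∈ A k m (h k m j))
    (hbdd : ∃ C : ℕ, ∀ k m g, (A k m g).card ≤ C)
    (hN : Filter.Tendsto N Filter.atTop Filter.atTop)
    (H0 : (k : ℕ) → Finset (Fin (N k)))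
    (Ω : ℕ → Type) [∀ k, MeasurableSpace (Ω k)]
    (P : (k : ℕ) → Measure (Ω k)) [∀ k, IsProbabilityMeasure (P k)]
    (α₀ α : Fin M → ℝ)
    (hα₀ : ∀ m, α₀ m ∈ Set.Ioo (0 : ℝ) 1) (hα : ∀ m, α m ∈ Set.Ioo (0 : ℝ) 1)
    (Rej : (k : ℕ) → Ω k → (m : Fin M) → Finset (Fin (G k m)))
    (V : (k : ℕ) → Ω k → Fin M → ℝ) (hV : ∀ k ω m, 0 ≤ V k ω m)
    (hmeasR : ∀ k m (g : Fin (G k m)), MeasurableSet {ω | g ∈ Rej k ω m})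
    (hmeasV : ∀ k m, Measurable fun ω => V k ω m)
    (hE : ∀ m, Filter.limsup (fun k => ∫⁻ ω, ENNReal.ofReal
        (((Rej k ω m ∩ nullGrp (A k) (H0 k) m).card : ℝ) / max (V k ω m) (α₀ m)) ∂ P k)
        Filter.atTop ≤ 1) :
    ∀ m, Filter.limsup (fun k => ∫⁻ ω, FDP (A k) (H0 k)
        (output (A k) (h k) (fun m' g => ENNReal.ofReal
          ((G k m' : ℝ) * (if g ∈ Rej k ω m' then 1 else 0) / max (V k ω m') (α₀ m'))) α)
        m ∂ P k) Filter.atTop ≤ ENNReal.ofReal (α m) := by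
  intro m
  have hpt : ∀ k (ω : Ω k), FDP (A k) (H0 k)
      (output (A k) (h k) (fun m' g => ENNReal.ofReal
        ((G k m' : ℝ) * (if g ∈ Rej k ω m' then 1 else 0) / max (V k ω m') (α₀ m'))) α) m
      ≤ ENNReal.ofReal (α m) * ENNReal.ofReal
        (((Rej k ω m ∩ nullGrp (A k) (H0 k) m).card : ℝ) / max (V k ω m) (α₀ m)) :=
    fun k ω => pointwise_bound (A k) (h k) (hdisj k) (hmem k) (H0 k) α₀ α
      (fun m' => (hα₀ m').1) (fun m' => (hα m').1) (Rej k ω) (V k ω) m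
  calc Filter.limsup (fun k => ∫⁻ ω, FDP (A k) (H0 k)
        (output (A k) (h k) (fun m' g => ENNReal.ofReal
          ((G k m' : ℝ) * (if g ∈ Rej k ω m' then 1 else 0) / max (V k ω m') (α₀ m'))) α)
        m ∂ P k) Filter.atTop
      ≤ Filter.limsup (fun k => ENNReal.ofReal (α m) * ∫⁻ ω, ENNReal.ofReal
          (((Rej k ω m ∩ nullGrp (A k) (H0 k) m).card : ℝ) / max (V k ω m) (α₀ m)) ∂ P k)
        Filter.atTop := by
        refine Filter.limsup_le_limsup (Filter.Eventually.of_forall fun k => ?_)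
        calc (∫⁻ ω, FDP (A k) (H0 k)
              (output (A k) (h k) (fun m' g => ENNReal.ofReal
                ((G k m' : ℝ) * (if g ∈ Rej k ω m' then 1 else 0) / max (V k ω m') (α₀ m'))) α)
              m ∂ P k)
            ≤ ∫⁻ ω, ENNReal.ofReal (α m) * ENNReal.ofReal
              (((Rej k ω m ∩ nullGrp (A k) (H0 k) m).card : ℝ) / max (V k ω m) (α₀ m)) ∂ P k :=
              lintegral_mono (hpt k)
          _ = ENNReal.ofReal (α m) * ∫⁻ ω, ENNReal.ofReal
              (((Rej k ω m ∩ nullGrp (A k) (H0 k) m).card : ℝ) / max (V k ω m) (α₀ m)) ∂ P k :=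
              lintegral_const_mul' _ _ ENNReal.ofReal_ne_top
    _ = ENNReal.ofReal (α m) * Filter.limsup (fun k => ∫⁻ ω, ENNReal.ofReal
          (((Rej k ω m ∩ nullGrp (A k) (H0 k) m).card : ℝ) / max (V k ω m) (α₀ m)) ∂ P k)
        Filter.atTop := ENNReal.limsup_const_mul_of_ne_top ENNReal.ofReal_ne_top
    _ ≤ ENNReal.ofReal (α m) * 1 := mul_le_mul_right (hE m) _
    _ = ENNReal.ofReal (α m) := mul_one _


end MultilayerEFilter
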